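/- arXiv:1608.07064 — 2 statements merged into one kernel-verified Lean document; each statement's English description precedes it below -/
import Mathlib

section
/- Let N = 4, σ > 0, and U^σ(x) = [N(N−2)]^{(N−2)/4}/(1+|x|²)^{(N−2+σ)/2}. Then ‖∇U^σ‖₂² ≤ ‖∇U‖₂² + Cσ for a constant C independent of σ ∈ (0,1), where U = U^0 is the Aubin–Talenti instanton. -/
open MeasureTheory

noncomputable def instantonPert (N : ℕ) (σ : ℝ) (x : EuclideanSpace ℝ (Fin N)) : ℝ :=
  ((N:ℝ) * ((N:ℝ) - 2)) ^ (((N:ℝ) - 2) / 4) /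
    (1 + ‖x‖ ^ (2:ℕ)) ^ (((N:ℝ) - 2 + σ) / 2)

lemma instantonPert_four (σ : ℝ) :
    instantonPert 4 σ = fun x : EuclideanSpace ℝ (Fin 4) =>
      (8:ℝ) ^ ((1:ℝ)/2) * (1 + ‖x‖ ^ (2:ℕ)) ^ (-((2 + σ)/2)) := by
  funext x
  unfold instantonPert
  rw [Real.rpow_neg (by positivity), div_eq_mul_inv]
  norm_num

lemma norm_grad_four (σ : ℝ) (hσ : 0 ≤ σ) (x : EuclideanSpace ℝ (Fin 4)) :
    ‖gradient (instantonPert 4 σ) x‖ =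
      (8:ℝ) ^ ((1:ℝ)/2) * (2 + σ) * (1 + ‖x‖ ^ (2:ℕ)) ^ (-((2 + σ)/2) - 1) * ‖x‖ := by
  have ht : (0:ℝ) < 1 + ‖x‖ ^ (2:ℕ) := by positivity
  have h1 : HasFDerivAt (fun y : EuclideanSpace ℝ (Fin 4) => (1:ℝ) + ‖y‖ ^ (2:ℕ))
      (2 • (innerSL ℝ x).comp (ContinuousLinearMap.id ℝ (EuclideanSpace ℝ (Fin 4)))) x :=
    (hasFDerivAt_id x).norm_sq.const_add 1
  have h2 := (h1.rpow_const (p := -((2 + σ)/2)) (Or.inl (ne_of_gt ht))).const_mul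
    ((8:ℝ) ^ ((1:ℝ)/2))
  rw [instantonPert_four]
  have hgrad : ‖gradient (fun x : EuclideanSpace ℝ (Fin 4) =>
      (8:ℝ) ^ ((1:ℝ)/2) * (1 + ‖x‖ ^ (2:ℕ)) ^ (-((2 + σ)/2))) x‖ =
      ‖fderiv ℝ (fun x : EuclideanSpace ℝ (Fin 4) =>
      (8:ℝ) ^ ((1:ℝ)/2) * (1 + ‖x‖ ^ (2:ℕ)) ^ (-((2 + σ)/2))) x‖ :=
    (InnerProductSpace.toDual ℝ _).symm.norm_map _
  rw [hgrad, h2.fderiv]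
  rw [← Nat.cast_smul_eq_nsmul ℝ 2 ((innerSL ℝ x).comp (ContinuousLinearMap.id ℝ _))]
  rw [ContinuousLinearMap.comp_id, norm_smul, norm_smul, norm_smul, innerSL_apply_norm]
  have e1 : ‖(8:ℝ) ^ ((1:ℝ)/2)‖ = (8:ℝ) ^ ((1:ℝ)/2) := Real.norm_of_nonneg (by positivity)
  have e2 : ‖-((2 + σ)/2) * (1 + ‖x‖ ^ (2:ℕ)) ^ (-((2 + σ)/2) - 1)‖
      = ((2 + σ)/2) * (1 + ‖x‖ ^ (2:ℕ)) ^ (-((2 + σ)/2) - 1) := by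
    rw [norm_mul, Real.norm_of_nonneg (Real.rpow_nonneg ht.le _), Real.norm_eq_abs,
      abs_neg, abs_of_nonneg (by linarith)]
  rw [e1, e2]
  simp only [Real.norm_ofNat, Nat.cast_ofNat]
  ring

lemma sq_norm_grad_four (σ : ℝ) (hσ : 0 ≤ σ) (x : EuclideanSpace ℝ (Fin 4)) :
    ‖gradient (instantonPert 4 σ) x‖ ^ (2:ℕ) =
      8 * (2 + σ) ^ (2:ℕ) * ‖x‖ ^ (2:ℕ) * (1 + ‖x‖ ^ (2:ℕ)) ^ (-(4 + σ)) := by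
  have ht : (0:ℝ) < 1 + ‖x‖ ^ (2:ℕ) := by positivity
  rw [norm_grad_four σ hσ x]
  rw [mul_pow, mul_pow, mul_pow]
  rw [← Real.rpow_natCast ((8:ℝ) ^ ((1:ℝ)/2)) 2, ← Real.rpow_mul (by norm_num : (0:ℝ) ≤ 8)]
  rw [← Real.rpow_natCast ((1 + ‖x‖ ^ (2:ℕ)) ^ (-((2 + σ)/2) - 1)) 2, ← Real.rpow_mul ht.le]
  have e1 : (1:ℝ)/2 * (2:ℕ) = 1 := by norm_num
  have e2 : (-((2 + σ)/2) - 1) * (2:ℕ) = -(4 + σ) := by push_cast; ring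
  rw [e1, e2, Real.rpow_one]
  ring

lemma pointwise_bound (σ : ℝ) (hσ0 : 0 < σ) (hσ1 : σ < 1) (x : EuclideanSpace ℝ (Fin 4)) :
    ‖gradient (instantonPert 4 σ) x‖ ^ (2:ℕ) ≤
      (1 + 2*σ) * ‖gradient (instantonPert 4 0) x‖ ^ (2:ℕ) := by
  have ht : (0:ℝ) < 1 + ‖x‖ ^ (2:ℕ) := by positivity
  rw [sq_norm_grad_four σ hσ0.le x, sq_norm_grad_four 0 le_rfl x]
  have h1 : (1 + ‖x‖ ^ (2:ℕ):ℝ) ^ (-(4 + σ)) ≤ (1 + ‖x‖ ^ (2:ℕ):ℝ) ^ (-(4 + (0:ℝ))) :=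
    Real.rpow_le_rpow_of_exponent_le (by nlinarith [sq_nonneg ‖x‖]) (by linarith)
  have h2 : ((2:ℝ) + σ) ^ (2:ℕ) ≤ (1 + 2*σ) * (2 + (0:ℝ)) ^ (2:ℕ) := by nlinarith
  have hA : (0:ℝ) ≤ (1 + ‖x‖ ^ (2:ℕ):ℝ) ^ (-(4 + σ)) := Real.rpow_nonneg ht.le _
  have hx2 : (0:ℝ) ≤ ‖x‖ ^ (2:ℕ) := by positivity
  calc 8 * (2 + σ) ^ (2:ℕ) * ‖x‖ ^ (2:ℕ) * (1 + ‖x‖ ^ (2:ℕ)) ^ (-(4 + σ))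
      ≤ 8 * ((1 + 2*σ) * (2 + (0:ℝ)) ^ (2:ℕ)) * ‖x‖ ^ (2:ℕ) *
        ((1 + ‖x‖ ^ (2:ℕ)) ^ (-(4 + (0:ℝ)))) := by
        apply mul_le_mul
        · apply mul_le_mul_of_nonneg_right _ hx2
          apply mul_le_mul_of_nonneg_left h2 (by norm_num)
        · exact h1
        · exact hA
        · positivity
    _ = (1 + 2*σ) * (8 * (2 + (0:ℝ)) ^ (2:ℕ) * ‖x‖ ^ (2:ℕ) *
        (1 + ‖x‖ ^ (2:ℕ)) ^ (-(4 + (0:ℝ)))) := by ring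

lemma integrable_sq_norm_grad_zero :
    Integrable (fun x : EuclideanSpace ℝ (Fin 4) =>
      ‖gradient (instantonPert 4 0) x‖ ^ (2:ℕ)) := by
  have h6 : Integrable (fun x : EuclideanSpace ℝ (Fin 4) =>
      ((1:ℝ) + ‖x‖ ^ (2:ℕ)) ^ (-(6:ℝ)/2)) := by
    apply integrable_rpow_neg_one_add_norm_sq
    rw [finrank_euclideanSpace_fin]; norm_num
  apply (h6.const_mul 32).mono'
  · have : (fun x : EuclideanSpace ℝ (Fin 4) => ‖gradient (instantonPert 4 0) x‖ ^ (2:ℕ))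
        = fun x : EuclideanSpace ℝ (Fin 4) =>
          8 * (2 + (0:ℝ)) ^ (2:ℕ) * ‖x‖ ^ (2:ℕ) * (1 + ‖x‖ ^ (2:ℕ)) ^ (-(4 + (0:ℝ))) := by
      funext x; exact sq_norm_grad_four 0 le_rfl x
    rw [this]
    apply Continuous.aestronglyMeasurable
    exact (continuous_const.mul (continuous_norm.pow 2)).mul
      ((continuous_const.add (continuous_norm.pow 2)).rpow_const
        (fun x => Or.inl (ne_of_gt (add_pos_of_pos_of_nonneg one_pos (pow_nonneg (norm_nonneg _) _)))))
  · refine Filter.Eventually.of_forall fun x => ?_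
    have ht : (0:ℝ) < 1 + ‖x‖ ^ (2:ℕ) := by positivity
    rw [Real.norm_of_nonneg (by positivity), sq_norm_grad_four 0 le_rfl x]
    have key : (1 + ‖x‖ ^ (2:ℕ):ℝ) ^ (-(6:ℝ)/2)
        = (1 + ‖x‖ ^ (2:ℕ)) * (1 + ‖x‖ ^ (2:ℕ)) ^ (-(4 + (0:ℝ))) := by
      have h := Real.rpow_add ht 1 (-(4+(0:ℝ)))
      rw [Real.rpow_one] at h
      rw [← h]; norm_num
    rw [key]
    have hxle : (‖x‖ ^ (2:ℕ):ℝ) ≤ 1 + ‖x‖ ^ (2:ℕ) := by linarith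
    have hA : (0:ℝ) ≤ (1 + ‖x‖ ^ (2:ℕ):ℝ) ^ (-(4 + (0:ℝ))) := Real.rpow_nonneg ht.le _
    calc (8:ℝ) * (2 + 0) ^ (2:ℕ) * ‖x‖ ^ (2:ℕ) * (1 + ‖x‖ ^ (2:ℕ)) ^ (-(4 + (0:ℝ)))
        ≤ 8 * (2 + 0) ^ (2:ℕ) * (1 + ‖x‖ ^ (2:ℕ)) * (1 + ‖x‖ ^ (2:ℕ)) ^ (-(4 + (0:ℝ))) := by
          apply mul_le_mul_of_nonneg_right _ hA
          apply mul_le_mul_of_nonneg_left hxle (by norm_num)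
      _ = 32 * ((1 + ‖x‖ ^ (2:ℕ)) * (1 + ‖x‖ ^ (2:ℕ)) ^ (-(4 + (0:ℝ)))) := by ring

/-- for `N = 4`, `‖∇U^σ‖₂² ≤ ‖∇U‖₂² + Cσ` uniformly in `σ ∈ (0,1)`. -/
theorem stmt_8 (N : ℕ) (hN : N = 4) :
    ∃ C : ℝ, 0 < C ∧ ∀ σ : ℝ, σ ∈ Set.Ioo (0:ℝ) 1 →
      (∫ x : EuclideanSpace ℝ (Fin N), ‖gradient (instantonPert N σ) x‖ ^ (2:ℕ)) ≤
        (∫ x : EuclideanSpace ℝ (Fin N), ‖gradient (instantonPert N 0) x‖ ^ (2:ℕ)) +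
          C * σ := by
  subst hN
  set I0 : ℝ := ∫ x : EuclideanSpace ℝ (Fin 4), ‖gradient (instantonPert 4 0) x‖ ^ (2:ℕ)
    with hI0def
  have hI0 : 0 ≤ I0 := integral_nonneg fun x => by positivity
  refine ⟨2 * I0 + 1, by linarith, fun σ hσ => ?_⟩
  obtain ⟨hσ0, hσ1⟩ := hσ
  have hint := integrable_sq_norm_grad_zero
  calc (∫ x : EuclideanSpace ℝ (Fin 4), ‖gradient (instantonPert 4 σ) x‖ ^ (2:ℕ))
      ≤ ∫ x : EuclideanSpace ℝ (Fin 4),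
          (1 + 2*σ) * ‖gradient (instantonPert 4 0) x‖ ^ (2:ℕ) := by
        apply integral_mono_of_nonneg
        · exact Filter.Eventually.of_forall fun x => by positivity
        · exact hint.const_mul _
        · exact Filter.Eventually.of_forall fun x => pointwise_bound σ hσ0 hσ1 x
    _ = (1 + 2*σ) * I0 := integral_const_mul _ _
    _ ≤ I0 + (2 * I0 + 1) * σ := by nlinarith
end

section
/- Let N = 4, α ∈ (0,N), p = (N+α)/(N−2), and U^σ(x) = [N(N−2)]^{(N−2)/4}/(1+|x|²)^{(N−2+σ)/2} for σ ∈ (0,1). Then B(U) − B(U^σ) ≤ Cσ for a constant C independent of σ, where B(v) = ∫∫ |v(x)|^p |v(y)|^p / |x−y|^{N−α} dx dy and U = U^0. -/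
open MeasureTheory

/-- The nonlocal energy `B(v) = ∫∫ |v(x)|^p |v(y)|^p / |x−y|^{N−α}`. -/
noncomputable def nonlocalB (N : ℕ) (α p : ℝ) (u : EuclideanSpace ℝ (Fin N) → ℝ) : ℝ :=
  ∫ x : EuclideanSpace ℝ (Fin N), ∫ y : EuclideanSpace ℝ (Fin N),
    |u x| ^ p * |u y| ^ p * ‖x - y‖ ^ (α - (N:ℝ))

open MeasureTheory Real Set Metric


local notation "E4" => EuclideanSpace ℝ (Fin 4)

lemma aux_ball {r : ℝ} (h0 : 0 < r) (h4 : r < 4) :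
    IntegrableOn (fun z : E4 => ‖z‖ ^ (-r)) (Metric.ball 0 1) volume := by
  set ν := volume.restrict (Metric.ball (0:E4) 1) with hν
  have hmeas : Measurable fun z : E4 => ‖z‖ ^ (-r) := by fun_prop
  have hnn : ∀ z : E4, 0 ≤ ‖z‖ ^ (-r) := fun z => rpow_nonneg (norm_nonneg _) _
  refine ⟨hmeas.aestronglyMeasurable, ?_⟩
  rw [HasFiniteIntegral, lintegral_enorm_of_nonneg hnn,
    lintegral_eq_lintegral_meas_le ν (Filter.Eventually.of_forall hnn) hmeas.aemeasurable]
  have hsub : ∀ t : ℝ, 0 < t → {a : E4 | t ≤ ‖a‖ ^ (-r)} ⊆ closedBall 0 (t ^ (-r)⁻¹) := by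
    intro t ht a ha
    simp only [mem_setOf_eq] at ha
    have ha0 : a ≠ 0 := by
      rintro rfl
      rw [norm_zero, Real.zero_rpow (by linarith : -r ≠ 0)] at ha
      · linarith
    rw [mem_closedBall_zero_iff]
    exact (Real.le_rpow_inv_iff_of_neg (norm_pos_iff.2 ha0) ht (by linarith)).2 ha
  calc ∫⁻ t in Ioi (0:ℝ), ν {a | t ≤ ‖a‖ ^ (-r)}
      ≤ ∫⁻ t in Ioc (0:ℝ) 1 ∪ Ioi 1, ν {a | t ≤ ‖a‖ ^ (-r)} :=
        lintegral_mono_set Ioi_subset_Ioc_union_Ioi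
    _ ≤ (∫⁻ t in Ioc (0:ℝ) 1, ν {a | t ≤ ‖a‖ ^ (-r)}) +
        ∫⁻ t in Ioi (1:ℝ), ν {a | t ≤ ‖a‖ ^ (-r)} := lintegral_union_le _ _ _
    _ < ⊤ := by
        refine ENNReal.add_lt_top.2 ⟨?_, ?_⟩
        · calc (∫⁻ t in Ioc (0:ℝ) 1, ν {a | t ≤ ‖a‖ ^ (-r)})
              ≤ ∫⁻ _ in Ioc (0:ℝ) 1, volume (Metric.ball (0:E4) 1) := by
                refine lintegral_mono fun t => ?_
                exact le_trans (measure_mono (subset_univ _))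
                  (by rw [hν, Measure.restrict_apply_univ])
            _ < ⊤ := by
                rw [lintegral_const, Measure.restrict_apply MeasurableSet.univ, univ_inter,
                  Real.volume_Ioc]
                exact ENNReal.mul_lt_top measure_ball_lt_top (by simp)
        · have hb : ∀ t ∈ Ioi (1:ℝ), ν {a | t ≤ ‖a‖ ^ (-r)} ≤
              ENNReal.ofReal (t ^ (-(4/r))) * volume (Metric.ball (0:E4) 1) := by
            intro t ht
            have ht0 : (0:ℝ) < t := lt_trans one_pos ht
            have hrad : (0:ℝ) ≤ t ^ (-r)⁻¹ := (rpow_pos_of_pos ht0 _).le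
            calc ν {a | t ≤ ‖a‖ ^ (-r)} ≤ volume (closedBall (0:E4) (t ^ (-r)⁻¹)) :=
                  le_trans (Measure.restrict_le_self _) (measure_mono (hsub t ht0))
              _ = ENNReal.ofReal ((t ^ (-r)⁻¹) ^ Module.finrank ℝ E4) *
                    volume (Metric.ball (0:E4) 1) := Measure.addHaar_closedBall _ _ hrad
              _ = ENNReal.ofReal (t ^ (-(4/r))) * volume (Metric.ball (0:E4) 1) := by
                  congr 1
                  rw [finrank_euclideanSpace_fin, ← Real.rpow_natCast (t ^ (-r)⁻¹) 4,
                    ← Real.rpow_mul ht0.le]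
                  congr 2
                  push_cast
                  rw [← neg_inv]
                  field_simp
          calc (∫⁻ t in Ioi (1:ℝ), ν {a | t ≤ ‖a‖ ^ (-r)})
              ≤ ∫⁻ t in Ioi (1:ℝ), ENNReal.ofReal (t ^ (-(4/r))) *
                  volume (Metric.ball (0:E4) 1) := by
                refine setLIntegral_mono' measurableSet_Ioi hb
            _ = (∫⁻ t in Ioi (1:ℝ), ENNReal.ofReal (t ^ (-(4/r)))) *
                  volume (Metric.ball (0:E4) 1) := by
                rw [lintegral_mul_const' _ _ measure_ball_lt_top.ne]
            _ < ⊤ := by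
                refine ENNReal.mul_lt_top ?_ measure_ball_lt_top
                have : IntegrableOn (fun t : ℝ => t ^ (-(4/r))) (Ioi 1) volume :=
                  integrableOn_Ioi_rpow_of_lt (by rw [neg_lt_neg_iff]; exact (one_lt_div h0).2 h4) one_pos
                exact this.setLIntegral_lt_top


lemma aux_one_var {q : ℝ} (hq : 2 < q) :
    Integrable (fun x : E4 => (1 + ‖x‖ ^ 2) ^ (-q)) volume := by
  have h := integrable_rpow_neg_one_add_norm_sq (E := E4) (μ := volume) (r := 2 * q)
    (by rw [finrank_euclideanSpace_fin]; push_cast; linarith)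
  simpa only [show -(2*q)/2 = -q by ring] using h

lemma aux_g {α q : ℝ} (hα0 : 0 < α) (hα4 : α < 4) (hq : 2 < q) :
    Integrable (fun z : E4 × E4 =>
      (1 + ‖z.1‖ ^ 2) ^ (-q) * (1 + ‖z.2‖ ^ 2) ^ (-q) * ‖z.1 - z.2‖ ^ (α - 4))
      (volume.prod volume) := by
  set u := fun x : E4 => (1 + ‖x‖ ^ 2) ^ (-q) with hu_def
  have hu : Integrable u volume := aux_one_var hq
  have hu_nn : ∀ x, 0 ≤ u x := fun x => rpow_nonneg (by positivity) _
  have hu_le_one : ∀ x, u x ≤ 1 :=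
    fun x => rpow_le_one_of_one_le_of_nonpos (by nlinarith [sq_nonneg ‖x‖]) (by linarith)
  set k := Set.indicator (Metric.ball (0:E4) 1) (fun z => ‖z‖ ^ (α - 4)) with hk_def
  have haux : IntegrableOn (fun z : E4 => ‖z‖ ^ (α-4)) (Metric.ball 0 1) volume := by
    have := aux_ball (r := 4 - α) (by linarith) (by linarith)
    simpa only [neg_sub] using this
  have hk : Integrable k volume := (integrable_indicator_iff measurableSet_ball).2 haux
  have hk_nn : ∀ z, 0 ≤ k z := by
    intro z
    exact Set.indicator_nonneg (fun z _ => rpow_nonneg (norm_nonneg _) _) z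
  have h1 : Integrable (fun z : E4 × E4 => u z.1 * u z.2) (volume.prod volume) :=
    hu.mul_prod hu
  have h2 : Integrable (fun z : E4 × E4 => u z.2 * k (z.1 - z.2)) (volume.prod volume) := by
    have := hu.convolution_integrand (ContinuousLinearMap.mul ℝ ℝ) hk
    simpa using this
  refine ((h1.add h2).mono' ?_ (Filter.Eventually.of_forall fun z => ?_))
  · apply Measurable.aestronglyMeasurable
    fun_prop
  · have hK_nn : (0:ℝ) ≤ ‖z.1 - z.2‖ ^ (α - 4) := rpow_nonneg (norm_nonneg _) _
    rw [Real.norm_eq_abs, abs_of_nonneg (by positivity)]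
    rcases lt_or_ge ‖z.1 - z.2‖ 1 with h | h
    · have hk_eq : k (z.1 - z.2) = ‖z.1 - z.2‖ ^ (α - 4) := by
        rw [hk_def, Set.indicator_of_mem (by simpa [mem_ball_zero_iff] using h)]
      calc u z.1 * u z.2 * ‖z.1 - z.2‖ ^ (α - 4)
          ≤ 1 * u z.2 * ‖z.1 - z.2‖ ^ (α - 4) :=
            mul_le_mul_of_nonneg_right
              (mul_le_mul_of_nonneg_right (hu_le_one z.1) (hu_nn z.2)) hK_nn
        _ = u z.2 * k (z.1 - z.2) := by rw [hk_eq]; ring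
        _ ≤ u z.1 * u z.2 + u z.2 * k (z.1 - z.2) := by
            nlinarith [mul_nonneg (hu_nn z.1) (hu_nn z.2)]
    · have hK_le : ‖z.1 - z.2‖ ^ (α - 4) ≤ 1 :=
        rpow_le_one_of_one_le_of_nonpos h (by linarith)
      calc u z.1 * u z.2 * ‖z.1 - z.2‖ ^ (α - 4)
          ≤ u z.1 * u z.2 * 1 :=
            mul_le_mul_of_nonneg_left hK_le (mul_nonneg (hu_nn _) (hu_nn _))
        _ ≤ u z.1 * u z.2 + u z.2 * k (z.1 - z.2) := by
            nlinarith [mul_nonneg (hu_nn z.2) (hk_nn (z.1 - z.2))]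

noncomputable def gker (α q : ℝ)
    (z : (EuclideanSpace ℝ (Fin 4)) × (EuclideanSpace ℝ (Fin 4))) : ℝ :=
  (1 + ‖z.1‖ ^ 2) ^ (-q) * (1 + ‖z.2‖ ^ 2) ^ (-q) * ‖z.1 - z.2‖ ^ (α - 4)

lemma gker_integrable {α q : ℝ} (hα0 : 0 < α) (hα4 : α < 4) (hq : 2 < q) :
    Integrable (gker α q) (volume.prod volume) := aux_g hα0 hα4 hq

lemma gker_nonneg (α q : ℝ) (z : E4 × E4) : 0 ≤ gker α q z := by
  unfold gker; positivity

noncomputable def lfun (α p c : ℝ)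
    (z : (EuclideanSpace ℝ (Fin 4)) × (EuclideanSpace ℝ (Fin 4))) : ℝ :=
  c * gker α p z * (Real.log (1 + ‖z.1‖ ^ 2) + Real.log (1 + ‖z.2‖ ^ 2))

lemma one_le_A (x : E4) : (1:ℝ) ≤ 1 + ‖x‖ ^ 2 := by nlinarith [sq_nonneg ‖x‖]

lemma A_pos (x : E4) : (0:ℝ) < 1 + ‖x‖ ^ 2 := lt_of_lt_of_le one_pos (one_le_A x)

lemma lfun_nonneg {α p c : ℝ} (hc : 0 ≤ c) (z : E4 × E4) : 0 ≤ lfun α p c z := by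
  unfold lfun
  have h1 := Real.log_nonneg (one_le_A z.1)
  have h2 := Real.log_nonneg (one_le_A z.2)
  have h3 := gker_nonneg α p z
  positivity

lemma key_log {α : ℝ} (hα0 : 0 < α) (p : ℝ) :
    ∀ A : ℝ, 1 ≤ A → A ^ (-p) * Real.log A ≤ (4/α) * A ^ (-(p - α/4)) := by
  intro A hA1
  have hA : (0:ℝ) < A := lt_of_lt_of_le one_pos hA1
  have h1 : Real.log A ≤ (4/α) * A ^ (α/4) := by
    have h := Real.log_le_sub_one_of_pos (Real.rpow_pos_of_pos hA (α/4))
    rw [Real.log_rpow hA] at h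
    have h2 : Real.log A = (4/α) * (α/4 * Real.log A) := by field_simp
    rw [h2]
    exact mul_le_mul_of_nonneg_left (by linarith) (by positivity)
  calc A ^ (-p) * Real.log A ≤ A ^ (-p) * ((4/α) * A ^ (α/4)) :=
        mul_le_mul_of_nonneg_left h1 (Real.rpow_nonneg hA.le _)
    _ = (4/α) * A ^ (-(p - α/4)) := by
        rw [show -(p - α/4) = -p + α/4 by ring, Real.rpow_add hA]
        ring

lemma lfun_integrable {α p c : ℝ} (hα0 : 0 < α) (hα4 : α < 4)
    (hq' : 2 < p - α/4) (hc : 0 ≤ c) :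
    Integrable (lfun α p c) (volume.prod volume) := by
  refine ((gker_integrable hα0 hα4 hq').const_mul (c * (2*(4/α)))).mono'
    ?_ (Filter.Eventually.of_forall fun z => ?_)
  · apply Measurable.aestronglyMeasurable
    unfold lfun gker
    have m1 : Measurable fun z : E4 × E4 => (1 + ‖z.1‖ ^ 2 : ℝ) := by fun_prop
    have m2 : Measurable fun z : E4 × E4 => (1 + ‖z.2‖ ^ 2 : ℝ) := by fun_prop
    have mg : Measurable fun z : E4 × E4 =>
        (1 + ‖z.1‖ ^ 2) ^ (-p) * (1 + ‖z.2‖ ^ 2) ^ (-p) * ‖z.1 - z.2‖ ^ (α - 4) := by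
      fun_prop
    exact (measurable_const.mul mg).mul
      ((Real.measurable_log.comp m1).add (Real.measurable_log.comp m2))
  · rw [Real.norm_eq_abs, abs_of_nonneg (lfun_nonneg hc z)]
    have hA1 := one_le_A z.1
    have hB1 := one_le_A z.2
    have hA := A_pos z.1
    have hB := A_pos z.2
    have hK : (0:ℝ) ≤ ‖z.1 - z.2‖ ^ (α - 4) := Real.rpow_nonneg (norm_nonneg _) _
    have k1 := key_log hα0 p _ hA1
    have k2 := key_log hα0 p _ hB1
    have mA : (1 + ‖z.1‖ ^ 2) ^ (-p) ≤ (1 + ‖z.1‖ ^ 2) ^ (-(p - α/4)) :=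
      Real.rpow_le_rpow_of_exponent_le hA1 (by linarith)
    have mB : (1 + ‖z.2‖ ^ 2) ^ (-p) ≤ (1 + ‖z.2‖ ^ 2) ^ (-(p - α/4)) :=
      Real.rpow_le_rpow_of_exponent_le hB1 (by linarith)
    have t1 : ((1 + ‖z.1‖ ^ 2) ^ (-p) * Real.log (1 + ‖z.1‖ ^ 2)) * (1 + ‖z.2‖ ^ 2) ^ (-p)
        ≤ ((4/α) * (1 + ‖z.1‖ ^ 2) ^ (-(p - α/4))) * (1 + ‖z.2‖ ^ 2) ^ (-(p - α/4)) :=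
      mul_le_mul k1 mB (Real.rpow_nonneg hB.le _) (by positivity)
    have t2 : (1 + ‖z.1‖ ^ 2) ^ (-p) * ((1 + ‖z.2‖ ^ 2) ^ (-p) * Real.log (1 + ‖z.2‖ ^ 2))
        ≤ (1 + ‖z.1‖ ^ 2) ^ (-(p - α/4)) * ((4/α) * (1 + ‖z.2‖ ^ 2) ^ (-(p - α/4))) :=
      mul_le_mul mA k2
        (mul_nonneg (Real.rpow_nonneg hB.le _) (Real.log_nonneg hB1))
        (Real.rpow_nonneg hA.le _)
    calc lfun α p c z
        = c * (‖z.1 - z.2‖ ^ (α - 4)) *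
            (((1 + ‖z.1‖ ^ 2) ^ (-p) * Real.log (1 + ‖z.1‖ ^ 2)) * (1 + ‖z.2‖ ^ 2) ^ (-p)
             + (1 + ‖z.1‖ ^ 2) ^ (-p) *
               ((1 + ‖z.2‖ ^ 2) ^ (-p) * Real.log (1 + ‖z.2‖ ^ 2))) := by
          unfold lfun gker; ring
      _ ≤ c * (‖z.1 - z.2‖ ^ (α - 4)) *
            (((4/α) * (1 + ‖z.1‖ ^ 2) ^ (-(p - α/4))) * (1 + ‖z.2‖ ^ 2) ^ (-(p - α/4))
             + (1 + ‖z.1‖ ^ 2) ^ (-(p - α/4)) *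
               ((4/α) * (1 + ‖z.2‖ ^ 2) ^ (-(p - α/4)))) :=
          mul_le_mul_of_nonneg_left (add_le_add t1 t2) (by positivity)
      _ = c * (2*(4/α)) * gker α (p - α/4) z := by
          unfold gker; ring

/-- for `N = 4`, `p = (N+α)/(N−2)`,
`B(U) − B(U^σ) ≤ Cσ` uniformly in `σ ∈ (0,1)`. -/
theorem stmt_9 (N : ℕ) (hN : N = 4) (α : ℝ) (hα : α ∈ Set.Ioo (0:ℝ) N)
    (p : ℝ) (hp : p = ((N:ℝ) + α) / ((N:ℝ) - 2)) :
    ∃ C : ℝ, 0 < C ∧ ∀ σ : ℝ, σ ∈ Set.Ioo (0:ℝ) 1 →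
      nonlocalB N α p (instantonPert N 0) - nonlocalB N α p (instantonPert N σ) ≤
        C * σ := by
  subst hN
  obtain ⟨hα0, hα4'⟩ := hα
  have hα4 : α < 4 := by exact_mod_cast hα4'
  have hp2 : p = 2 + α/2 := by rw [hp]; push_cast; ring
  have hpgt : 2 < p := by rw [hp2]; linarith
  have hppos : 0 < p := by linarith
  set c : ℝ := (((4:ℕ):ℝ) * (((4:ℕ):ℝ) - 2)) ^ ((((4:ℕ):ℝ) - 2) / 4) with hc_def
  have hc : 0 < c := by rw [hc_def]; positivity
  have hcc : 0 ≤ c ^ p * c ^ p := by positivity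
  -- pointwise formula for |U^σ|^p
  have hUabs : ∀ σ : ℝ, ∀ x : E4,
      |instantonPert 4 σ x| ^ p = c ^ p * (1 + ‖x‖ ^ 2) ^ (-((2+σ)*p/2)) := by
    intro σ x
    have hA := A_pos x
    have h1 : instantonPert 4 σ x = c / (1 + ‖x‖ ^ 2) ^ ((2+σ)/2) := by
      unfold instantonPert
      rw [hc_def]
      norm_num
    rw [h1, abs_of_pos (by positivity),
      Real.div_rpow hc.le (Real.rpow_nonneg hA.le _),
      ← Real.rpow_mul hA.le, show (2+σ)/2*p = (2+σ)*p/2 by ring,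
      Real.rpow_neg hA.le, div_eq_mul_inv]
  have hcast : (α - ((4:ℕ):ℝ)) = α - 4 := by norm_num
  have hFeq : ∀ σ : ℝ, (fun z : E4 × E4 =>
      |instantonPert 4 σ z.1| ^ p * |instantonPert 4 σ z.2| ^ p *
        ‖z.1 - z.2‖ ^ (α - ((4:ℕ):ℝ)))
      = fun z => (c^p * c^p) * gker α ((2+σ)*p/2) z := by
    intro σ; funext z
    rw [hUabs σ z.1, hUabs σ z.2, hcast]
    unfold gker; ring
  have hqσ : ∀ σ : ℝ, 0 ≤ σ → 2 < (2+σ)*p/2 := by intro σ hσ; nlinarith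
  have hIntF : ∀ σ : ℝ, 0 ≤ σ → Integrable (fun z : E4 × E4 =>
      |instantonPert 4 σ z.1| ^ p * |instantonPert 4 σ z.2| ^ p *
        ‖z.1 - z.2‖ ^ (α - ((4:ℕ):ℝ))) (volume.prod volume) := by
    intro σ hσ
    rw [hFeq σ]
    exact (gker_integrable hα0 hα4 (hqσ σ hσ)).const_mul _
  have hB : ∀ σ : ℝ, 0 ≤ σ → nonlocalB 4 α p (instantonPert 4 σ)
      = ∫ z : E4 × E4, |instantonPert 4 σ z.1| ^ p * |instantonPert 4 σ z.2| ^ p *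
          ‖z.1 - z.2‖ ^ (α - ((4:ℕ):ℝ)) ∂(volume.prod volume) := by
    intro σ hσ
    unfold nonlocalB
    exact integral_integral (hIntF σ hσ)
  have hℓint : Integrable (lfun α p (c^p*c^p)) (volume.prod volume) :=
    lfun_integrable hα0 hα4 (by rw [hp2]; linarith) hcc
  set I := ∫ z, lfun α p (c^p*c^p) z ∂(volume.prod volume) with hI_def
  have hInonneg : 0 ≤ I := integral_nonneg (fun z => lfun_nonneg hcc z)
  refine ⟨(p/2) * I + 1, by nlinarith, ?_⟩
  intro σ hσ
  obtain ⟨hσ0, hσ1⟩ := hσ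
  have hpt : ∀ z : E4 × E4,
      (|instantonPert 4 0 z.1| ^ p * |instantonPert 4 0 z.2| ^ p *
        ‖z.1 - z.2‖ ^ (α - ((4:ℕ):ℝ)))
      - (|instantonPert 4 σ z.1| ^ p * |instantonPert 4 σ z.2| ^ p *
        ‖z.1 - z.2‖ ^ (α - ((4:ℕ):ℝ)))
      ≤ (σ * (p/2)) * lfun α p (c^p*c^p) z := by
    intro z
    have hA := A_pos z.1
    have hB' := A_pos z.2
    have e0 : |instantonPert 4 0 z.1| ^ p * |instantonPert 4 0 z.2| ^ p *
        ‖z.1 - z.2‖ ^ (α - ((4:ℕ):ℝ))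
        = (c^p*c^p) * ((1+‖z.1‖^2)^(-p) * (1+‖z.2‖^2)^(-p) * ‖z.1 - z.2‖^(α-4)) := by
      rw [hUabs 0 z.1, hUabs 0 z.2, hcast, show ((2:ℝ)+0)*p/2 = p by ring]
      ring
    have eσ : |instantonPert 4 σ z.1| ^ p * |instantonPert 4 σ z.2| ^ p *
        ‖z.1 - z.2‖ ^ (α - ((4:ℕ):ℝ))
        = (c^p*c^p) * (((1+‖z.1‖^2)^(-p) * (1+‖z.1‖^2)^(-(σ*p/2))) *
            ((1+‖z.2‖^2)^(-p) * (1+‖z.2‖^2)^(-(σ*p/2))) * ‖z.1 - z.2‖^(α-4)) := by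
      rw [hUabs σ z.1, hUabs σ z.2, hcast,
        show -((2+σ)*p/2) = -p + -(σ*p/2) by ring,
        Real.rpow_add hA, Real.rpow_add hB']
      ring
    have hexp : 1 - (1+‖z.1‖^2)^(-(σ*p/2)) * (1+‖z.2‖^2)^(-(σ*p/2))
        ≤ (σ*p/2) * (Real.log (1+‖z.1‖^2) + Real.log (1+‖z.2‖^2)) := by
      have h := Real.add_one_le_exp (Real.log (1+‖z.1‖^2) * (-(σ*p/2))
        + Real.log (1+‖z.2‖^2) * (-(σ*p/2)))
      rw [Real.exp_add] at h
      rw [Real.rpow_def_of_pos hA, Real.rpow_def_of_pos hB']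
      have h2 : Real.log (1+‖z.1‖^2) * (-(σ*p/2)) + Real.log (1+‖z.2‖^2) * (-(σ*p/2))
          = -((σ*p/2) * (Real.log (1+‖z.1‖^2) + Real.log (1+‖z.2‖^2))) := by ring
      rw [h2] at h
      linarith
    calc (|instantonPert 4 0 z.1| ^ p * |instantonPert 4 0 z.2| ^ p *
        ‖z.1 - z.2‖ ^ (α - ((4:ℕ):ℝ)))
        - (|instantonPert 4 σ z.1| ^ p * |instantonPert 4 σ z.2| ^ p *
        ‖z.1 - z.2‖ ^ (α - ((4:ℕ):ℝ)))
        = ((c^p*c^p) * ((1+‖z.1‖^2)^(-p) * (1+‖z.2‖^2)^(-p) * ‖z.1 - z.2‖^(α-4))) *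
            (1 - (1+‖z.1‖^2)^(-(σ*p/2)) * (1+‖z.2‖^2)^(-(σ*p/2))) := by
          rw [e0, eσ]; ring
      _ ≤ ((c^p*c^p) * ((1+‖z.1‖^2)^(-p) * (1+‖z.2‖^2)^(-p) * ‖z.1 - z.2‖^(α-4))) *
            ((σ*p/2) * (Real.log (1+‖z.1‖^2) + Real.log (1+‖z.2‖^2))) :=
          mul_le_mul_of_nonneg_left hexp (by positivity)
      _ = (σ * (p/2)) * lfun α p (c^p*c^p) z := by unfold lfun gker; ring
  rw [hB 0 le_rfl, hB σ hσ0.le, ← integral_sub (hIntF 0 le_rfl) (hIntF σ hσ0.le)]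
  calc (∫ z : E4 × E4, (|instantonPert 4 0 z.1| ^ p * |instantonPert 4 0 z.2| ^ p *
        ‖z.1 - z.2‖ ^ (α - ((4:ℕ):ℝ)))
      - (|instantonPert 4 σ z.1| ^ p * |instantonPert 4 σ z.2| ^ p *
        ‖z.1 - z.2‖ ^ (α - ((4:ℕ):ℝ))) ∂(volume.prod volume))
      ≤ ∫ z : E4 × E4, (σ * (p/2)) * lfun α p (c^p*c^p) z ∂(volume.prod volume) :=
        integral_mono ((hIntF 0 le_rfl).sub (hIntF σ hσ0.le))
          (hℓint.const_mul _) hpt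
    _ = (σ * (p/2)) * I := by rw [MeasureTheory.integral_const_mul]
    _ ≤ ((p/2) * I + 1) * σ := by nlinarith
end
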